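/- For h > 0 and θ ∈ (0,1), the function G(λ) = (16/(hλ(θ-2)²))^(1/(θ-2)) satisfies the ODE -hG^θ + 8λ(G')² + 8G(G' + λG'') = 0 for all λ > 0. -/

import Mathlib

/-- For h > 0 and θ ∈ (0,1), G(λ) = (16/(hλ(θ-2)²))^(1/(θ-2)) satisfies
    -hG^θ + 8λ(G')² + 8G(G' + λG'') = 0 for all λ > 0. -/
theorem stmt_3 (h θ : ℝ) (hh : 0 < h) (hθ : θ ∈ Set.Ioo (0 : ℝ) 1)
    (G : ℝ → ℝ) (hG : G = fun l => (16 / (h * l * (θ - 2) ^ 2)) ^ (1 / (θ - 2)))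
    (l : ℝ) (hl : 0 < l) :
    -h * (G l) ^ θ + 8 * l * (deriv G l) ^ 2 +
      8 * G l * (deriv G l + l * deriv (deriv G) l) = 0 := by
  obtain ⟨hθ0, hθ1⟩ := hθ
  have ht : θ - 2 < 0 := by linarith
  have ht' : θ - 2 ≠ 0 := ne_of_lt ht
  have ht2 : (0:ℝ) < (θ - 2) ^ 2 := by positivity
  set B : ℝ := 16 / (h * (θ - 2) ^ 2) with hBdef
  have hB : 0 < B := by positivity
  set A : ℝ := B ^ (1 / (θ - 2)) with hAdef
  have hA : 0 < A := Real.rpow_pos_of_pos hB _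
  set p : ℝ := -(1 / (θ - 2)) with hpdef
  have hGF : ∀ x ∈ Set.Ioi (0:ℝ), G x = A * x ^ p := by
    intro x hx
    have hx : (0:ℝ) < x := hx
    rw [hG]
    simp only
    have hbase : 16 / (h * x * (θ - 2) ^ 2) = B * x⁻¹ := by
      rw [hBdef]; field_simp
    rw [hbase, Real.mul_rpow hB.le (inv_nonneg.mpr hx.le),
      Real.inv_rpow hx.le, ← Real.rpow_neg hx.le]
  have hF' : ∀ x ∈ Set.Ioi (0:ℝ), HasDerivAt (fun y : ℝ => A * y ^ p) (A * p * x ^ (p - 1)) x := by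
    intro x hx
    have := (Real.hasDerivAt_rpow_const (p := p) (Or.inl (ne_of_gt hx))).const_mul A
    rw [mul_assoc]
    exact this
  have hdG : ∀ x ∈ Set.Ioi (0:ℝ), deriv G x = A * p * x ^ (p - 1) := by
    intro x hx
    have heq : G =ᶠ[nhds x] fun y : ℝ => A * y ^ p :=
      Filter.eventuallyEq_of_mem (Ioi_mem_nhds hx) hGF
    rw [heq.deriv_eq, (hF' x hx).deriv]
  have hdd : deriv (deriv G) l = A * p * ((p - 1) * l ^ (p - 1 - 1)) := by
    have heq : deriv G =ᶠ[nhds l] fun y : ℝ => A * p * y ^ (p - 1) :=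
      Filter.eventuallyEq_of_mem (Ioi_mem_nhds hl) hdG
    rw [heq.deriv_eq]
    have := (Real.hasDerivAt_rpow_const (p := p - 1) (Or.inl (ne_of_gt hl))).const_mul (A * p)
    rw [this.deriv]
  have hAB : A ^ (θ - 2) = B := by
    rw [hAdef, ← Real.rpow_mul hB.le, one_div, inv_mul_cancel₀ ht', Real.rpow_one]
  have hkey : h * A ^ θ = 16 * A ^ 2 * p ^ 2 := by
    have e : A ^ θ = A ^ (2:ℝ) * A ^ (θ - 2) := by
      rw [← Real.rpow_add hA]; norm_num
    rw [e, hAB, Real.rpow_two, hpdef]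
    rw [hBdef]
    field_simp
  rw [hGF l hl, hdG l hl, hdd,
    Real.mul_rpow hA.le (Real.rpow_nonneg hl.le p), ← Real.rpow_mul hl.le]
  have e1 : l ^ (p - 1) = l ^ p / l := by rw [Real.rpow_sub hl, Real.rpow_one]
  have e2 : l ^ (p - 1 - 1) = l ^ p / l / l := by
    rw [Real.rpow_sub hl, Real.rpow_sub hl, Real.rpow_one]
  have e3 : l ^ (p * θ) = (l ^ p) ^ 2 / l := by
    have hpe : p * θ = p + p - 1 := by rw [hpdef]; field_simp; ring
    rw [hpe, Real.rpow_sub hl, Real.rpow_add hl, Real.rpow_one, sq]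
  rw [e1, e2, e3]
  have hl' : l ≠ 0 := ne_of_gt hl
  field_simp
  rw [hpdef] at hkey
  linear_combination (-(l ^ p) ^ 2) * hkey
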